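/- Suppose for each integer i ≥ 0, a set B_i of arms satisfies Σ_{v ∈ B_i} Δ(v)·n(v) ≤ C·ln(T)·2^{i(1+p_z)}·c₀ for constants C, c₀ and each arm v ∈ B_i has Δ(v) ∈ (2^{-i-1}, 2^{-i}]. Then for any ρ ∈ (0,1], the total regret Σ_i Σ_{v ∈ B_i} Δ(v)·n(v), split at threshold ρ, is at most ρ·T + C'·ln(T)·(1/(2ρ))^{p_z+1} for some constant C'. Choosing ρ = Θ((ln T / T)^{1/(p_z+2)}) yields total regret O((ln T)^{1/(p_z+2)} · T^{(p_z+1)/(p_z+2)}). -/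

import Mathlib

open Finset
open scoped Classical

/-- Regret decomposition over dyadic badness groups: if each group
`B_i = {v : 2^{-i-1} < Δ v ≤ 2^{-i}}` contributes at most `C ln T · 2^{i(1+p_z)} · c₀`,
then for every threshold `ρ ∈ (0,1]` the total regret is at most
`ρ T + C' ln T (1/(2ρ))^{p_z+1}`, and the total regret is
`O((ln T)^{1/(p_z+2)} T^{(p_z+1)/(p_z+2)})`. -/
theorem zooming_regret_decomposition (C c₀ pz : ℝ) (hC : 0 < C) (hc₀ : 0 < c₀) (hpz : 0 ≤ pz) :
    ∃ C' : ℝ, 0 < C' ∧ ∃ C'' : ℝ, 0 < C'' ∧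
      ∀ (T : ℝ) (S : Finset ℕ) (Δ n : ℕ → ℝ),
        2 ≤ T →
        (∀ v ∈ S, 0 < Δ v ∧ Δ v ≤ 1) →
        (∀ v ∈ S, 0 ≤ n v) →
        (∑ v ∈ S, n v) ≤ T →
        (∀ i : ℕ,
          ∑ v ∈ S.filter (fun v => (2 : ℝ) ^ (-(i : ℝ) - 1) < Δ v ∧ Δ v ≤ (2 : ℝ) ^ (-(i : ℝ))),
              Δ v * n v ≤ C * Real.log T * (2 : ℝ) ^ ((i : ℝ) * (1 + pz)) * c₀) →
        (∀ ρ : ℝ, 0 < ρ → ρ ≤ 1 →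
            ∑ v ∈ S, Δ v * n v ≤ ρ * T + C' * Real.log T * (1 / (2 * ρ)) ^ (pz + 1)) ∧
          ∑ v ∈ S, Δ v * n v ≤
            C'' * (Real.log T) ^ (1 / (pz + 2)) * T ^ ((pz + 1) / (pz + 2)) := by
  have h2 : (1:ℝ) < 2 := one_lt_two
  set r : ℝ := (2:ℝ) ^ (1 + pz) with hr_def
  have hr2 : (2:ℝ) ≤ r := by
    calc (2:ℝ) = (2:ℝ) ^ (1:ℝ) := (Real.rpow_one 2).symm
    _ ≤ r := Real.rpow_le_rpow_of_exponent_le (by norm_num) (by linarith)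
  have hrpos : 0 < r := by positivity
  set C' : ℝ := 2 * C * c₀ * (2:ℝ) ^ (pz + 1) with hC'_def
  have hC'pos : 0 < C' := by positivity
  refine ⟨C', hC'pos, 1 + C', by positivity, ?_⟩
  intro T S Δ n hT hΔ hn hnT hgroup
  have hT0 : (0:ℝ) < T := by linarith
  have hlogT : 0 < Real.log T := Real.log_pos (by linarith)
  have key : ∀ ρ : ℝ, 0 < ρ → ρ ≤ 1 →
      ∑ v ∈ S, Δ v * n v ≤ ρ * T + C' * Real.log T * (1 / (2 * ρ)) ^ (pz + 1) := by
    intro ρ hρ hρ1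
    have hsplit := Finset.sum_filter_add_sum_filter_not S (fun v => Δ v ≤ ρ)
      (fun v => Δ v * n v)
    -- good arms
    have hgood : ∑ v ∈ S.filter (fun v => Δ v ≤ ρ), Δ v * n v ≤ ρ * T := by
      calc ∑ v ∈ S.filter (fun v => Δ v ≤ ρ), Δ v * n v
          ≤ ∑ v ∈ S.filter (fun v => Δ v ≤ ρ), ρ * n v := by
            refine Finset.sum_le_sum ?_
            intro v hv
            rw [Finset.mem_filter] at hv
            exact mul_le_mul_of_nonneg_right hv.2 (hn v hv.1)
        _ = ρ * ∑ v ∈ S.filter (fun v => Δ v ≤ ρ), n v := by rw [Finset.mul_sum]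
        _ ≤ ρ * ∑ v ∈ S, n v := by
            refine mul_le_mul_of_nonneg_left ?_ hρ.le
            exact Finset.sum_le_sum_of_subset_of_nonneg (Finset.filter_subset _ _)
              (fun v hv _ => hn v hv)
        _ ≤ ρ * T := mul_le_mul_of_nonneg_left hnT hρ.le
    -- bad arms
    set N : ℕ := ⌈Real.logb 2 (1/ρ)⌉₊ with hN_def
    have hinvρ : (1:ℝ) ≤ 1/ρ := by
      rw [le_div_iff₀ hρ]; linarith
    have hlogbnn : 0 ≤ Real.logb 2 (1/ρ) := Real.logb_nonneg h2 hinvρ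
    set B : ℕ → Finset ℕ := fun i =>
      S.filter (fun v => (2 : ℝ) ^ (-(i : ℝ) - 1) < Δ v ∧ Δ v ≤ (2 : ℝ) ^ (-(i : ℝ))) with hB_def
    have hsub : S.filter (fun v => ¬ Δ v ≤ ρ) ⊆ (Finset.range N).biUnion B := by
      intro v hv
      rw [Finset.mem_filter] at hv
      obtain ⟨hvS, hvρ⟩ := hv
      push_neg at hvρ
      obtain ⟨hΔpos, hΔ1⟩ := hΔ v hvS
      set i : ℕ := ⌊Real.logb 2 (1 / Δ v)⌋₊ with hi_def
      have hx : (1:ℝ) ≤ 1 / Δ v := by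
        rw [le_div_iff₀ hΔpos]; linarith
      have hxnn : 0 ≤ Real.logb 2 (1 / Δ v) := Real.logb_nonneg h2 hx
      have hfl : (i:ℝ) ≤ Real.logb 2 (1 / Δ v) := Nat.floor_le hxnn
      have hfl2 : Real.logb 2 (1 / Δ v) < (i:ℝ) + 1 := Nat.lt_floor_add_one _
      have hΔeq : (2:ℝ) ^ (-Real.logb 2 (1 / Δ v)) = Δ v := by
        rw [Real.rpow_neg (by norm_num), Real.rpow_logb (by norm_num) (by norm_num)
          (by positivity), one_div, inv_inv]
      have hmem : v ∈ B i := by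
        rw [hB_def]
        simp only [Finset.mem_filter]
        refine ⟨hvS, ?_, ?_⟩
        · calc (2:ℝ) ^ (-(i:ℝ) - 1) < (2:ℝ) ^ (-Real.logb 2 (1 / Δ v)) := by
                apply Real.rpow_lt_rpow_of_exponent_lt h2; linarith
            _ = Δ v := hΔeq
        · calc Δ v = (2:ℝ) ^ (-Real.logb 2 (1 / Δ v)) := hΔeq.symm
            _ ≤ (2:ℝ) ^ (-(i:ℝ)) := by
                apply Real.rpow_le_rpow_of_exponent_le (by norm_num); linarith
      have hiN : i ∈ Finset.range N := by
        rw [Finset.mem_range]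
        have h1 : Real.logb 2 (1 / Δ v) < Real.logb 2 (1/ρ) := by
          apply Real.logb_lt_logb h2 (by positivity)
          exact one_div_lt_one_div_of_lt hρ hvρ
        have h2' : (i:ℝ) < (N:ℝ) := by
          have hceil : Real.logb 2 (1/ρ) ≤ (N:ℝ) := Nat.le_ceil _
          linarith
        exact_mod_cast h2'
      exact Finset.mem_biUnion.mpr ⟨i, hiN, hmem⟩
    have hd : ∀ i j : ℕ, i < j → Disjoint (B i) (B j) := by
      intro i j hij
      rw [Finset.disjoint_left]
      intro v hvi hvj
      rw [hB_def, Finset.mem_filter] at hvi hvj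
      have h1 : (2:ℝ) ^ (-(i:ℝ) - 1) < Δ v := hvi.2.1
      have h2'' : Δ v ≤ (2:ℝ) ^ (-(j:ℝ)) := hvj.2.2
      have hij' : (i:ℝ) + 1 ≤ (j:ℝ) := by exact_mod_cast hij
      have : (2:ℝ) ^ (-(j:ℝ)) ≤ (2:ℝ) ^ (-(i:ℝ) - 1) :=
        Real.rpow_le_rpow_of_exponent_le (by norm_num) (by linarith)
      linarith
    have hdisj : Set.PairwiseDisjoint (↑(Finset.range N)) B := by
      intro i _ j _ hne
      rcases lt_or_gt_of_ne hne with h | h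
      · exact hd i j h
      · exact (hd j i h).symm
    have hpow : ∀ i : ℕ, (2:ℝ) ^ ((i:ℝ) * (1 + pz)) = r ^ i := by
      intro i
      rw [mul_comm, Real.rpow_mul (by norm_num : (0:ℝ) ≤ 2), Real.rpow_natCast]
    have hgeom : ∑ i ∈ Finset.range N, r ^ i ≤ 2 * (1/ρ) ^ (pz + 1) := by
      rcases Nat.eq_zero_or_pos N with hN0 | hNpos
      · rw [hN0]; simp; positivity
      · have hrne : r ≠ 1 := by linarith
        rw [geom_sum_eq hrne]
        have hN1 : ((N:ℝ) - 1) < Real.logb 2 (1/ρ) := by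
          have := Nat.ceil_lt_add_one hlogbnn
          have : (N:ℝ) < Real.logb 2 (1/ρ) + 1 := by exact_mod_cast this
          linarith
        have h2N : (2:ℝ) ^ ((N:ℝ) - 1) < 1/ρ := by
          calc (2:ℝ) ^ ((N:ℝ)-1) < 2 ^ Real.logb 2 (1/ρ) :=
                Real.rpow_lt_rpow_of_exponent_lt h2 hN1
            _ = 1/ρ := Real.rpow_logb (by norm_num) (by norm_num) (by positivity)
        have hcast : ((N - 1 : ℕ) : ℝ) = (N:ℝ) - 1 := by
          rw [Nat.cast_sub hNpos]; simp
        have hrN1 : r ^ (N - 1) ≤ (1/ρ) ^ (pz + 1) := by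
          have key1 : r ^ (N-1 : ℕ) = ((2:ℝ) ^ ((N:ℝ)-1)) ^ (pz+1) := by
            rw [← Real.rpow_natCast r (N-1), hr_def, hcast,
              ← Real.rpow_mul (by norm_num : (0:ℝ) ≤ 2),
              ← Real.rpow_mul (by norm_num : (0:ℝ) ≤ 2)]
            congr 1
            ring
          rw [key1]
          exact Real.rpow_le_rpow (by positivity) h2N.le (by linarith)
        have hrn : r ^ N = r ^ (N-1) * r := by
          rw [← pow_succ, Nat.sub_add_cancel hNpos]
        have hp : (0:ℝ) < r ^ (N-1) := pow_pos hrpos _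
        have hdvd : (r ^ N - 1) / (r - 1) ≤ 2 * r ^ (N - 1) := by
          rw [div_le_iff₀ (by linarith : (0:ℝ) < r - 1)]
          nlinarith [hp, hr2, hrn]
        calc (r ^ N - 1) / (r - 1) ≤ 2 * r ^ (N - 1) := hdvd
          _ ≤ 2 * (1/ρ) ^ (pz + 1) := by linarith
    have hbad : ∑ v ∈ S.filter (fun v => ¬ Δ v ≤ ρ), Δ v * n v
        ≤ C' * Real.log T * (1/(2*ρ)) ^ (pz+1) := by
      calc ∑ v ∈ S.filter (fun v => ¬ Δ v ≤ ρ), Δ v * n v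
          ≤ ∑ v ∈ (Finset.range N).biUnion B, Δ v * n v := by
            apply Finset.sum_le_sum_of_subset_of_nonneg hsub
            intro v hv _
            have hvS : v ∈ S := by
              rcases Finset.mem_biUnion.mp hv with ⟨i, _, hvi⟩
              exact (Finset.mem_filter.mp hvi).1
            exact mul_nonneg (hΔ v hvS).1.le (hn v hvS)
        _ = ∑ i ∈ Finset.range N, ∑ v ∈ B i, Δ v * n v := Finset.sum_biUnion hdisj
        _ ≤ ∑ i ∈ Finset.range N, C * Real.log T * r ^ i * c₀ := by
            apply Finset.sum_le_sum
            intro i _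
            have := hgroup i
            rwa [hpow i] at this
        _ = C * Real.log T * c₀ * ∑ i ∈ Finset.range N, r ^ i := by
            rw [Finset.mul_sum]
            apply Finset.sum_congr rfl
            intros; ring
        _ ≤ C * Real.log T * c₀ * (2 * (1/ρ) ^ (pz+1)) :=
            mul_le_mul_of_nonneg_left hgeom (by positivity)
        _ = C' * Real.log T * (1/(2*ρ)) ^ (pz+1) := by
            rw [hC'_def]
            have h1ρ : (1/ρ : ℝ) = 2 * (1/(2*ρ)) := by field_simp
            rw [h1ρ, Real.mul_rpow (by norm_num) (by positivity)]
            ring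
    linarith [hgood, hbad, hsplit]
  refine ⟨key, ?_⟩
  set L : ℝ := Real.log T with hL_def
  set α : ℝ := 1/(pz+2) with hα_def
  set β : ℝ := (pz+1)/(pz+2) with hβ_def
  have hpz2 : (0:ℝ) < pz + 2 := by linarith
  have hαβ : α + β = 1 := by
    rw [hα_def, hβ_def, ← add_div]
    field_simp
    ring
  have hαpos : 0 < α := by positivity
  have hβpos : 0 < β := by rw [hβ_def]; positivity
  have hαβ2 : α * (pz+1) = β := by rw [hα_def, hβ_def]; field_simp
  set ρ₀ : ℝ := (L / T) ^ α with hρ₀_def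
  have hLT : L / T ≤ 1 := by
    rw [div_le_one hT0]
    have := Real.log_le_sub_one_of_pos hT0
    linarith
  have hLTpos : 0 < L / T := by positivity
  have hρ₀pos : 0 < ρ₀ := Real.rpow_pos_of_pos hLTpos _
  have hρ₀1 : ρ₀ ≤ 1 := Real.rpow_le_one hLTpos.le hLT hαpos.le
  have hkey := key ρ₀ hρ₀pos hρ₀1
  have hterm1 : ρ₀ * T = L ^ α * T ^ β := by
    have hTα : (T:ℝ) ^ α ≠ 0 := ne_of_gt (Real.rpow_pos_of_pos hT0 α)
    have hTβ : T ^ β * T ^ α = T := by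
      rw [← Real.rpow_add hT0, show β + α = 1 by linarith, Real.rpow_one]
    rw [hρ₀_def, Real.div_rpow hlogT.le hT0.le, div_mul_eq_mul_div,
      div_eq_iff hTα, mul_assoc, hTβ]
  have hterm2 : C' * L * (1/(2*ρ₀)) ^ (pz+1) ≤ C' * L ^ α * T ^ β := by
    have ha : (1/(2*ρ₀)) ^ (pz+1) ≤ (1/ρ₀) ^ (pz+1) := by
      apply Real.rpow_le_rpow (by positivity) ?_ (by linarith)
      apply one_div_le_one_div_of_le hρ₀pos
      linarith
    have hb : (1/ρ₀ : ℝ) ^ (pz+1) = T ^ β / L ^ β := by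
      rw [hρ₀_def, one_div, ← Real.rpow_neg hLTpos.le,
        ← Real.rpow_mul hLTpos.le]
      rw [show -α * (pz+1) = -β by linarith [hαβ2]]
      rw [Real.rpow_neg hLTpos.le, Real.div_rpow hlogT.le hT0.le]
      rw [inv_div]
    calc C' * L * (1/(2*ρ₀)) ^ (pz+1) ≤ C' * L * (1/ρ₀) ^ (pz+1) := by
          apply mul_le_mul_of_nonneg_left ha
          positivity
      _ = C' * L * (T ^ β / L ^ β) := by rw [hb]
      _ = C' * (L / L ^ β) * T ^ β := by ring
      _ = C' * L ^ α * T ^ β := by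
          have hLβ : (L:ℝ) ^ β ≠ 0 := ne_of_gt (Real.rpow_pos_of_pos hlogT β)
          have hdiv : L / L ^ β = L ^ α := by
            rw [div_eq_iff hLβ, ← Real.rpow_add hlogT,
              show α + β = 1 from hαβ, Real.rpow_one]
          rw [hdiv]
  calc ∑ v ∈ S, Δ v * n v ≤ ρ₀ * T + C' * L * (1/(2*ρ₀)) ^ (pz+1) := hkey
    _ ≤ L ^ α * T ^ β + C' * L ^ α * T ^ β := by
        rw [hterm1]; linarith [hterm2]
    _ = (1 + C') * L ^ α * T ^ β := by ring
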